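/- Fix integers α_1 > α_2 > ⋯ > α_N ≥ 1 and m_1, …, m_N ≥ 1, set n := Σ_r α_r m_r and F := ⊕_{r=1}^N E_{α_r}(I_{m_r}). Let B = ⊕_{r=1}^N T(B^r_0, …, B^r_{α_r−1}) and C = ⊕_{r=1}^N T(C^r_0, …, C^r_{α_r−1}), where each B^r_j, C^r_j ∈ ℂ^{m_r×m_r} is symmetric and B^r_0, C^r_0 are invertible. If X has form (0T0) with diagonal-block leading Toeplitz coefficients A^{rr}_0, and C = F Xᵀ F B X, then for every r = 1, …, N one has C^r_0 = (A^{rr}_0)ᵀ B^r_0 A^{rr}_0. -/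

import Mathlib

open Matrix

noncomputable section

/-- Form (0T0): block matrix partitioned by Jordan structure `(α, m)` whose `(r,s)` block,
viewed as an `α r × α s` array of `m r × m s` blocks, is a rectangular block
upper-triangular Toeplitz matrix aligned to the top-right corner. -/
def IsForm0T0 {N : ℕ} (α m : Fin N → ℕ)
    (X : Matrix (Σ r : Fin N, Fin (α r) × Fin (m r)) (Σ r : Fin N, Fin (α r) × Fin (m r)) ℂ) :
    Prop :=
  ∃ A : ∀ r s : Fin N, ℕ → Matrix (Fin (m r)) (Fin (m s)) ℂ,
    ∀ (r s : Fin N) (i : Fin (α r)) (j : Fin (α s)) (a : Fin (m r)) (b : Fin (m s)),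
      X ⟨r, (i, a)⟩ ⟨s, (j, b)⟩ =
        if (i : ℕ) + (α s - min (α r) (α s)) ≤ (j : ℕ) then
          A r s ((j : ℕ) - (i : ℕ) - (α s - min (α r) (α s))) a b
        else 0

/-- `E_b(I_m)`: the `bm × bm` block matrix with `I_m` on the block anti-diagonal. -/
def revE (b m : ℕ) : Matrix (Fin b × Fin m) (Fin b × Fin m) ℂ :=
  Matrix.of fun p q => if (p.1 : ℕ) + (q.1 : ℕ) + 1 = b ∧ p.2 = q.2 then 1 else 0

/-- `F = ⊕_r E_{α r}(I_{m r})`. -/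
def bigF {N : ℕ} (α m : Fin N → ℕ) :
    Matrix (Σ r : Fin N, Fin (α r) × Fin (m r)) (Σ r : Fin N, Fin (α r) × Fin (m r)) ℂ :=
  Matrix.blockDiagonal' fun r => revE (α r) (m r)

/-- The `n × n` upper-triangular Jordan block `J_n(λ)`. -/
def Jmat (n : ℕ) (lam : ℂ) : Matrix (Fin n) (Fin n) ℂ :=
  Matrix.of fun i j => if (j : ℕ) = (i : ℕ) then lam else if (j : ℕ) = (i : ℕ) + 1 then 1 else 0

/-- The `n × n` backward identity matrix `E_n`. -/
def ErevC (n : ℕ) : Matrix (Fin n) (Fin n) ℂ :=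
  Matrix.of fun i j => if (i : ℕ) + (j : ℕ) + 1 = n then 1 else 0

/-- `P_n = (1/√2)(I + i E_n)`. -/
noncomputable def Pmat (n : ℕ) : Matrix (Fin n) (Fin n) ℂ :=
  (Real.sqrt 2 : ℂ)⁻¹ • (1 + Complex.I • ErevC n)

/-- `P_n⁻¹ = (1/√2)(I − i E_n)`. -/
noncomputable def PmatInv (n : ℕ) : Matrix (Fin n) (Fin n) ℂ :=
  (Real.sqrt 2 : ℂ)⁻¹ • (1 - Complex.I • ErevC n)

/-- The symmetric canonical form `K_n(λ) = P_n J_n(λ) P_n⁻¹` of a Jordan block. -/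
noncomputable def Kmat (n : ℕ) (lam : ℂ) : Matrix (Fin n) (Fin n) ℂ :=
  Pmat n * Jmat n lam * PmatInv n

/-- `T(A_0, …)`: the `β × β` block upper-triangular Toeplitz matrix with blocks `A_j`. -/
def blkToeplitz (β p q : ℕ) (A : ℕ → Matrix (Fin p) (Fin q) ℂ) :
    Matrix (Fin β × Fin p) (Fin β × Fin q) ℂ :=
  Matrix.of fun x y =>
    if (x.1 : ℕ) ≤ (y.1 : ℕ) then A ((y.1 : ℕ) - (x.1 : ℕ)) x.2 y.2 else 0

/-- The `(i,i)`-th `m r × m r` entry-block of the `(r,r)` diagonal block of `X`; for a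
matrix of form (0T0) this is the leading Toeplitz coefficient `A^{rr}_0`. -/
def diagLead {N : ℕ} (α m : Fin N → ℕ)
    (X : Matrix (Σ r : Fin N, Fin (α r) × Fin (m r)) (Σ r : Fin N, Fin (α r) × Fin (m r)) ℂ)
    (r : Fin N) (i : Fin (α r)) : Matrix (Fin (m r)) (Fin (m r)) ℂ :=
  Matrix.of fun a b => X ⟨r, (i, a)⟩ ⟨r, (i, b)⟩

/-- The space of skew-symmetric matrices commuting with `S`. -/
def skewCommSubmodule (ι : Type*) [Fintype ι] [DecidableEq ι] (S : Matrix ι ι ℂ) :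
    Submodule ℂ (Matrix ι ι ℂ) where
  carrier := {X | Xᵀ = -X ∧ X * S = S * X}
  add_mem' := by
    rintro a b ⟨ha1, ha2⟩ ⟨hb1, hb2⟩
    refine ⟨?_, ?_⟩
    · rw [Matrix.transpose_add, ha1, hb1, neg_add]
    · rw [add_mul, mul_add, ha2, hb2]
  zero_mem' := by
    refine ⟨?_, ?_⟩
    · simp
    · simp
  smul_mem' := by
    rintro c a ⟨h1, h2⟩
    refine ⟨?_, ?_⟩
    · rw [Matrix.transpose_smul, h1, smul_neg]
    · rw [Matrix.smul_mul, Matrix.mul_smul, h2]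

/-- The isotropy group (as a set) of `S` under orthogonal similarity. -/
def sigmaSet {ι : Type*} [Fintype ι] [DecidableEq ι] (S : Matrix ι ι ℂ) : Set (Matrix ι ι ℂ) :=
  {Q | Qᵀ * Q = 1 ∧ Qᵀ * S * Q = S}


/-- Left multiplication by `bigF` reverses the row index within each block. -/
lemma F_mul_apply {N : ℕ} (α m : Fin N → ℕ)
    (Y : Matrix (Σ r : Fin N, Fin (α r) × Fin (m r)) (Σ r : Fin N, Fin (α r) × Fin (m r)) ℂ)
    (r : Fin N) (i : Fin (α r)) (a : Fin (m r)) (q) :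
    (bigF α m * Y) ⟨r, (i, a)⟩ q = Y ⟨r, (i.rev, a)⟩ q := by
  rw [Matrix.mul_apply, ← Finset.univ_sigma_univ, Finset.sum_sigma]
  rw [Finset.sum_eq_single r]
  · rw [Finset.sum_eq_single ((i.rev, a) : Fin (α r) × Fin (m r))]
    · have h1 : bigF α m ⟨r, (i, a)⟩ ⟨r, (i.rev, a)⟩ = 1 := by
        have hlt := i.isLt
        simp only [bigF, Matrix.blockDiagonal'_apply_eq, revE, Matrix.of_apply]
        rw [if_pos ⟨by simp [Fin.val_rev]; omega, trivial⟩]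
      rw [h1, one_mul]
    · rintro ⟨j, c⟩ _ hne
      have h0 : bigF α m ⟨r, (i, a)⟩ ⟨r, (j, c)⟩ = 0 := by
        simp only [bigF, Matrix.blockDiagonal'_apply_eq, revE, Matrix.of_apply,
          ite_eq_right_iff, and_imp]
        intro h1 h2
        exfalso
        apply hne
        have hj : j = i.rev := by
          ext
          have := i.isLt
          simp [Fin.val_rev]
          omega
        rw [hj, h2]
      rw [h0, zero_mul]
    · intro h; exact absurd (Finset.mem_univ _) h
  · intro s _ hs
    apply Finset.sum_eq_zero
    rintro ⟨j, c⟩ _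
    rw [show bigF α m ⟨r, (i, a)⟩ ⟨s, (j, c)⟩ = 0 from
      Matrix.blockDiagonal'_apply_ne _ _ _ (fun h => hs h.symm), zero_mul]
  · intro h; exact absurd (Finset.mem_univ _) h

/-- Let `B = ⊕_r T(B^r_0,…,B^r_{α_r−1})` and
`C = ⊕_r T(C^r_0,…,C^r_{α_r−1})` with all coefficients symmetric and the leading ones
invertible. If `X` has form (0T0) and `C = F Xᵀ F B X`, then
`C^r_0 = (A^{rr}_0)ᵀ B^r_0 A^{rr}_0` for every `r`. -/
theorem stmt10 (N : ℕ) (α m : Fin N → ℕ)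
    (hαa : StrictAnti α) (hα1 : ∀ r, 0 < α r) (hm : ∀ r, 0 < m r)
    (B C : ∀ r : Fin N, ℕ → Matrix (Fin (m r)) (Fin (m r)) ℂ)
    (hBsym : ∀ r, ∀ j < α r, (B r j)ᵀ = B r j)
    (hCsym : ∀ r, ∀ j < α r, (C r j)ᵀ = C r j)
    (hB0 : ∀ r, IsUnit (B r 0)) (hC0 : ∀ r, IsUnit (C r 0))
    (X : Matrix (Σ r : Fin N, Fin (α r) × Fin (m r))
      (Σ r : Fin N, Fin (α r) × Fin (m r)) ℂ)
    (hX : IsForm0T0 α m X)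
    (heq : (Matrix.blockDiagonal' fun r => blkToeplitz (α r) (m r) (m r) (C r)) =
      bigF α m * Xᵀ * bigF α m *
        (Matrix.blockDiagonal' fun r => blkToeplitz (α r) (m r) (m r) (B r)) * X) :
    ∀ r : Fin N,
      C r 0 = (diagLead α m X r ⟨0, hα1 r⟩)ᵀ * B r 0 * diagLead α m X r ⟨0, hα1 r⟩ := by
  obtain ⟨A, hA⟩ := hX
  intro r
  have hr0 : 0 < α r := hα1 r
  set i0 : Fin (α r) := ⟨0, hr0⟩ with hi0
  -- diagLead equals A r r 0
  have hdiag : diagLead α m X r i0 = A r r 0 := by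
    ext a b
    have := hA r r i0 i0 a b
    simpa [diagLead, min_self] using this
  rw [hdiag]
  -- the (BD * X) partial product
  set BD := (Matrix.blockDiagonal' fun r => blkToeplitz (α r) (m r) (m r) (B r)) with hBD
  have hBDX : ∀ (s : Fin N) (k : Fin (α s)) (c : Fin (m s)) (b : Fin (m r)),
      (BD * X) ⟨s, (k, c)⟩ ⟨r, (i0, b)⟩ =
        if (k : ℕ) = 0 ∧ α r ≤ α s then ∑ d, B s 0 c d * A s r 0 d b else 0 := by
    intro s k c b
    rw [Matrix.mul_apply, ← Finset.univ_sigma_univ, Finset.sum_sigma]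
    rw [Finset.sum_eq_single s]
    · rw [Fintype.sum_prod_type]
      by_cases hks : (k : ℕ) = 0 ∧ α r ≤ α s
      · rw [if_pos hks]
        obtain ⟨hk0, hrs⟩ := hks
        have hmin : min (α s) (α r) = α r := min_eq_right hrs
        have hs0 : 0 < α s := lt_of_lt_of_le hr0 hrs
        rw [Finset.sum_eq_single (⟨0, hs0⟩ : Fin (α s))]
        · apply Finset.sum_congr rfl
          intro d _
          rw [hBD, Matrix.blockDiagonal'_apply_eq]
          rw [hA s r ⟨0, hs0⟩ i0 d b]
          simp only [blkToeplitz, Matrix.of_apply]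
          rw [if_pos (by simp [hk0] : ((k, c).1 : ℕ) ≤ (((⟨0, hs0⟩ : Fin (α s)), d).1 : ℕ))]
          rw [hmin]
          simp [hk0, hi0]
        · intro k' _ hk'
          apply Finset.sum_eq_zero
          intro d _
          rw [hA s r k' i0 d b]
          have : ¬ ((k' : ℕ) + (α r - min (α s) (α r)) ≤ (i0 : ℕ)) := by
            have : (k' : ℕ) ≠ 0 := fun h => hk' (by ext; exact h)
            simp [hmin, hi0]
            omega
          rw [if_neg this, mul_zero]
        · intro h; exact absurd (Finset.mem_univ _) h
      · rw [if_neg hks]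
        apply Finset.sum_eq_zero
        intro k' _
        apply Finset.sum_eq_zero
        intro d _
        rw [hA s r k' i0 d b]
        by_cases hc : (k' : ℕ) + (α r - min (α s) (α r)) ≤ (i0 : ℕ)
        · -- forces α r ≤ α s and k' = 0, hence (k:ℕ) ≠ 0, first factor vanishes
          have hi0v : (i0 : ℕ) = 0 := rfl
          have hrs : α r ≤ α s := by
            by_contra hlt
            push_neg at hlt
            have : min (α s) (α r) = α s := min_eq_left (le_of_lt hlt)
            rw [this] at hc
            omega
          have hk'0 : (k' : ℕ) = 0 := by
            have : min (α s) (α r) = α r := min_eq_right hrs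
            rw [this] at hc
            omega
          have hk : ¬ ((k : ℕ) ≤ (k' : ℕ)) := by
            have : (k : ℕ) ≠ 0 := fun h => hks ⟨h, hrs⟩
            omega
          rw [hBD, Matrix.blockDiagonal'_apply_eq]
          simp only [blkToeplitz, Matrix.of_apply]
          rw [if_neg hk, zero_mul]
        · rw [if_neg hc, mul_zero]
    · intro s' _ hs'
      apply Finset.sum_eq_zero
      rintro ⟨k', d⟩ _
      rw [hBD, show (Matrix.blockDiagonal' fun r => blkToeplitz (α r) (m r) (m r) (B r))
        ⟨s, (k, c)⟩ ⟨s', (k', d)⟩ = 0 from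
        Matrix.blockDiagonal'_apply_ne _ _ _ (fun h => hs' h.symm), zero_mul]
    · intro h; exact absurd (Finset.mem_univ _) h
  -- rearrange heq
  have heq' : (Matrix.blockDiagonal' fun r => blkToeplitz (α r) (m r) (m r) (C r)) =
      bigF α m * (Xᵀ * (bigF α m * (BD * X))) := by
    rw [heq, hBD]; simp only [Matrix.mul_assoc]
  ext a b
  have key := congrFun (congrFun heq' ⟨r, (i0, a)⟩) ⟨r, (i0, b)⟩
  have hL : (Matrix.blockDiagonal' fun r => blkToeplitz (α r) (m r) (m r) (C r))
      ⟨r, (i0, a)⟩ ⟨r, (i0, b)⟩ = C r 0 a b := by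
    rw [Matrix.blockDiagonal'_apply_eq]
    simp [blkToeplitz]
  rw [hL, F_mul_apply] at key
  rw [Matrix.mul_apply, ← Finset.univ_sigma_univ, Finset.sum_sigma] at key
  have hrr : ∀ j : Fin (α r), (j.rev : ℕ) = 0 ↔ (j : ℕ) = α r - 1 := by
    intro j
    have := j.isLt
    simp [Fin.val_rev]
    omega
  have key2 : ∑ s : Fin N, ∑ x : Fin (α s) × Fin (m s),
      Xᵀ ⟨r, (i0.rev, a)⟩ ⟨s, x⟩ * (bigF α m * (BD * X)) ⟨s, x⟩ ⟨r, (i0, b)⟩ =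
      ∑ c, A r r 0 c a * ∑ d, B r 0 c d * A r r 0 d b := by
    rw [Finset.sum_eq_single r]
    · rw [Fintype.sum_prod_type]
      rw [Finset.sum_eq_single (i0.rev : Fin (α r))]
      · apply Finset.sum_congr rfl
        intro c _
        rw [F_mul_apply, hBDX, Matrix.transpose_apply, hA r r i0.rev i0.rev c a]
        simp [min_self, Fin.rev_rev, hi0]
      · intro j _ hj
        apply Finset.sum_eq_zero
        intro c _
        rw [F_mul_apply, hBDX]
        have : ¬ ((j.rev : ℕ) = 0 ∧ α r ≤ α r) := by
          rintro ⟨h1, -⟩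
          apply hj
          ext
          rw [(hrr j).mp h1]
          simp [Fin.val_rev, hi0]
        rw [if_neg this, mul_zero]
      · intro h; exact absurd (Finset.mem_univ _) h
    · intro s _ hs
      apply Finset.sum_eq_zero
      rintro ⟨j, c⟩ _
      rw [F_mul_apply, hBDX]
      by_cases h2 : (j.rev : ℕ) = 0 ∧ α r ≤ α s
      · obtain ⟨hj0, hrs⟩ := h2
        have hsr : α r < α s := lt_of_le_of_ne hrs (fun h => hs (hαa.injective h.symm))
        have hjv : (j : ℕ) = α s - 1 := by
          have := j.isLt
          simp [Fin.val_rev] at hj0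
          omega
        have hmin : min (α s) (α r) = α r := min_eq_right hrs
        rw [Matrix.transpose_apply, hA s r j i0.rev c a]
        have : ¬ ((j : ℕ) + (α r - min (α s) (α r)) ≤ (i0.rev : ℕ)) := by
          simp [hmin, Fin.val_rev, hi0]
          omega
        rw [if_neg this, zero_mul]
      · rw [if_neg h2, mul_zero]
    · intro h; exact absurd (Finset.mem_univ _) h
  rw [key2] at key
  have hkey' : (∑ c, A r r 0 c a * ∑ d, B r 0 c d * A r r 0 d b)
      = ((A r r 0)ᵀ * B r 0 * A r r 0) a b := by
    simp only [Matrix.mul_apply, Matrix.transpose_apply, Finset.sum_mul, Finset.mul_sum,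
      mul_assoc]
    exact Finset.sum_comm.symm
  rw [key, hkey']
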